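/- Let A be a real p×r matrix, let x_1, …, x_n ∈ ℝ^r and e_1, …, e_n ∈ ℝ^p, and set y_t = A x_t + e_t for t = 1, …, n. Fix 1 ≤ k₀ < n and define M̂ = Σ_{k=1}^{k₀} Σ̂_y(k) Σ̂_y(k)ᵀ. Then the sum of the eigenspaces of the symmetric nonnegative-definite matrix M̂ corresponding to eigenvalues strictly greater than Σ_{k=1}^{k₀} ‖Σ̂_e(k)‖² has dimension at most (k₀ + 1)·r; equivalently, counting multiplicities, at most (k₀+1)r eigenvalues of M̂ exceed Σ_{k=1}^{k₀} ‖Σ̂_e(k)‖². (This is the deterministic core of Theorem 2(iii): beyond the (k₀+1)r largest, the eigenvalues of M̂ are controlled purely by the sample autocovariances of the noise.) -/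

import Mathlib

open Matrix Finset

/-- Spectral norm of a real matrix: the operator norm of the induced linear map
between Euclidean spaces (the largest singular value). -/
noncomputable def specNorm {m n : ℕ} (G : Matrix (Fin m) (Fin n) ℝ) : ℝ :=
  ‖LinearMap.toContinuousLinearMap (Matrix.toEuclideanLin G)‖

/-- Sample mean of the observations `z 1, …, z n` (indexed `1,…,n`). -/
noncomputable def sampleMean {d : ℕ} (n : ℕ) (z : ℕ → Fin d → ℝ) : Fin d → ℝ :=
  (n : ℝ)⁻¹ • ∑ t ∈ Finset.Icc 1 n, z t

/-- Centered sample lag-`k` autocovariance matrix of the sequence `z 1,…,z n`: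
`Σ̂_z(k) = n⁻¹ ∑_{t=1}^{n−k} (z_{t+k} − z̄)(z_t − z̄)ᵀ`. -/
noncomputable def sampleAutoCov {d : ℕ} (n k : ℕ)
    (z : ℕ → Fin d → ℝ) : Matrix (Fin d) (Fin d) ℝ :=
  (n : ℝ)⁻¹ •
    ∑ t ∈ Finset.Icc 1 (n - k),
      vecMulVec (z (t + k) - sampleMean n z) (z t - sampleMean n z)

namespace Stmt12Aux

lemma dot_sum_right {d : ℕ} {ι : Type*} (s : Finset ι) (u : Fin d → ℝ) (v : ι → Fin d → ℝ) :
    u ⬝ᵥ (∑ i ∈ s, v i) = ∑ i ∈ s, u ⬝ᵥ v i := by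
  simp only [dotProduct, Finset.sum_apply, Finset.mul_sum]
  exact Finset.sum_comm

lemma dot_sum_left {d : ℕ} {ι : Type*} (s : Finset ι) (u : Fin d → ℝ) (v : ι → Fin d → ℝ) :
    (∑ i ∈ s, v i) ⬝ᵥ u = ∑ i ∈ s, v i ⬝ᵥ u := by
  simp only [dotProduct, Finset.sum_apply, Finset.sum_mul]
  exact Finset.sum_comm

lemma sum_mulVec' {d d' : ℕ} {ι : Type*} (s : Finset ι) (M : ι → Matrix (Fin d) (Fin d') ℝ)
    (v : Fin d' → ℝ) :
    (∑ i ∈ s, M i).mulVec v = ∑ i ∈ s, (M i).mulVec v := by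
  funext j
  rw [Finset.sum_apply]
  simp only [mulVec, dotProduct, Matrix.sum_apply, Finset.sum_mul]
  exact Finset.sum_comm

lemma mulVec_sum_vec {d d' : ℕ} {ι : Type*} (s : Finset ι) (M : Matrix (Fin d) (Fin d') ℝ)
    (v : ι → Fin d' → ℝ) :
    M.mulVec (∑ i ∈ s, v i) = ∑ i ∈ s, M.mulVec (v i) := by
  rw [← Matrix.mulVecLin_apply, map_sum]
  simp [Matrix.mulVecLin_apply]

lemma vecMulVec_mulVec' {d d' : ℕ} (b : Fin d → ℝ) (a v : Fin d' → ℝ) :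
    (vecMulVec b a).mulVec v = (a ⬝ᵥ v) • b := by
  funext j
  simp only [mulVec, dotProduct, vecMulVec_apply, Pi.smul_apply, smul_eq_mul, Finset.sum_mul]
  exact Finset.sum_congr rfl fun i _ => by ring

lemma norm_sq_euclid {d : ℕ} (v : Fin d → ℝ) :
    ‖(WithLp.equiv 2 (Fin d → ℝ)).symm v‖ ^ 2 = v ⬝ᵥ v := by
  rw [← real_inner_self_eq_norm_sq]
  simp [PiLp.inner_apply, RCLike.inner_apply, dotProduct, mul_comm, EuclideanSpace.norm_eq]
  rw [Real.sq_sqrt (Finset.sum_nonneg fun i _ => sq_nonneg _)]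
  simp [sq]

lemma dot_mulVec_le {m n : ℕ} (G : Matrix (Fin m) (Fin n) ℝ) (v : Fin n → ℝ) :
    (G.mulVec v) ⬝ᵥ (G.mulVec v) ≤ specNorm G ^ 2 * (v ⬝ᵥ v) := by
  have h := (LinearMap.toContinuousLinearMap (Matrix.toEuclideanLin G)).le_opNorm
      ((WithLp.equiv 2 (Fin n → ℝ)).symm v)
  have happ : (LinearMap.toContinuousLinearMap (Matrix.toEuclideanLin G))
      ((WithLp.equiv 2 (Fin n → ℝ)).symm v)
      = (WithLp.equiv 2 (Fin m → ℝ)).symm (G.mulVec v) := by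
    simp [Matrix.toEuclideanLin_apply_piLp_toLp]
  rw [happ] at h
  calc (G.mulVec v) ⬝ᵥ (G.mulVec v)
      = ‖(WithLp.equiv 2 (Fin m → ℝ)).symm (G.mulVec v)‖ ^ 2 := (norm_sq_euclid _).symm
    _ ≤ (specNorm G * ‖(WithLp.equiv 2 (Fin n → ℝ)).symm v‖) ^ 2 := by
        apply pow_le_pow_left₀ (norm_nonneg _) h
    _ = specNorm G ^ 2 * (v ⬝ᵥ v) := by rw [mul_pow, norm_sq_euclid]

lemma specNorm_transpose {m n : ℕ} (G : Matrix (Fin m) (Fin n) ℝ) :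
    specNorm Gᵀ = specNorm G := by
  have h : Gᵀ = Gᴴ := by
    ext i j; simp [Matrix.conjTranspose_apply]
  unfold specNorm
  rw [h, Matrix.toEuclideanLin_conjTranspose_eq_adjoint,
    LinearMap.adjoint_toContinuousLinearMap]
  exact LinearIsometryEquiv.norm_map ContinuousLinearMap.adjoint _

lemma sampleAutoCov_transpose_mulVec {d : ℕ} (n k : ℕ) (z : ℕ → Fin d → ℝ) (v : Fin d → ℝ) :
    (sampleAutoCov n k z)ᵀ.mulVec v
      = (n : ℝ)⁻¹ •
          ∑ t ∈ Finset.Icc 1 (n - k),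
            ((z (t + k) - sampleMean n z) ⬝ᵥ v) • (z t - sampleMean n z) := by
  unfold sampleAutoCov
  rw [Matrix.transpose_smul, Matrix.smul_mulVec]
  congr 1
  have ht : (∑ t ∈ Finset.Icc 1 (n - k),
      vecMulVec (z (t + k) - sampleMean n z) (z t - sampleMean n z))ᵀ
      = ∑ t ∈ Finset.Icc 1 (n - k),
          vecMulVec (z t - sampleMean n z) (z (t + k) - sampleMean n z) := by
    rw [Matrix.transpose_sum]
    refine Finset.sum_congr rfl fun t _ => ?_
    ext i j
    simp [vecMulVec_apply, Matrix.transpose_apply, mul_comm]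
  rw [ht, sum_mulVec']
  refine Finset.sum_congr rfl fun t _ => ?_
  rw [vecMulVec_mulVec']

lemma eig_orth {d : ℕ} (M : Matrix (Fin d) (Fin d) ℝ) (hsym : Mᵀ = M) {μ ν : ℝ} (hne : μ ≠ ν)
    {a b : Fin d → ℝ} (ha : M.mulVec a = μ • a) (hb : M.mulVec b = ν • b) :
    a ⬝ᵥ b = 0 := by
  have h1 : a ⬝ᵥ M.mulVec b = ν * (a ⬝ᵥ b) := by
    rw [hb, dotProduct_smul]; rfl
  have h2 : a ⬝ᵥ M.mulVec b = μ * (a ⬝ᵥ b) := by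
    rw [dotProduct_mulVec]
    have : a ᵥ* M = M.mulVec a := by
      conv_lhs => rw [← hsym]
      rw [Matrix.vecMul_transpose]
    rw [this, ha, smul_dotProduct]; rfl
  have h3 : (μ - ν) * (a ⬝ᵥ b) = 0 := by
    rw [sub_mul]; rw [← h1, ← h2]; ring
  rcases mul_eq_zero.mp h3 with h | h
  · exact absurd (sub_eq_zero.mp h) hne
  · exact h

/-- linear functional `v ↦ w ⬝ᵥ v`. -/
noncomputable def dotLin {d : ℕ} (w : Fin d → ℝ) : (Fin d → ℝ) →ₗ[ℝ] ℝ where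
  toFun v := w ⬝ᵥ v
  map_add' a b := dotProduct_add w a b
  map_smul' c a := by simp [dotProduct_smul]

@[simp] lemma dotLin_apply {d : ℕ} (w v : Fin d → ℝ) : dotLin w v = w ⬝ᵥ v := rfl

lemma dotProduct_self_nonneg {d : ℕ} (v : Fin d → ℝ) : 0 ≤ v ⬝ᵥ v :=
  Finset.sum_nonneg fun i _ => mul_self_nonneg _

end Stmt12Aux

open Stmt12Aux

/-- for `y_t = A x_t + e_t` and
`M̂ = ∑_{k=1}^{k₀} Σ̂_y(k) Σ̂_y(k)ᵀ`, the sum of the eigenspaces of `M̂` for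
eigenvalues strictly greater than `∑_{k=1}^{k₀} ‖Σ̂_e(k)‖²` has dimension at
most `(k₀ + 1) r`. -/
theorem small_eigenvalues_controlled_by_noise_autocov
    {p r n : ℕ} (A : Matrix (Fin p) (Fin r) ℝ)
    (x : ℕ → Fin r → ℝ) (e : ℕ → Fin p → ℝ) (y : ℕ → Fin p → ℝ)
    (hy : ∀ t, y t = A.mulVec (x t) + e t)
    (k₀ : ℕ) (hk₀ : 1 ≤ k₀) (hk₀n : k₀ < n)
    (Mhat : Matrix (Fin p) (Fin p) ℝ)
    (hMhat : Mhat = ∑ k ∈ Finset.Icc 1 k₀, sampleAutoCov n k y * (sampleAutoCov n k y)ᵀ) :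
    Module.finrank ℝ
        ↥(⨆ μ ∈ {μ : ℝ | ∑ k ∈ Finset.Icc 1 k₀, specNorm (sampleAutoCov n k e) ^ 2 < μ},
            Module.End.eigenspace Mhat.mulVecLin μ)
      ≤ (k₀ + 1) * r := by
  classical
  set c : ℝ := ∑ k ∈ Finset.Icc 1 k₀, specNorm (sampleAutoCov n k e) ^ 2 with hc
  set f : ℕ → Fin p → ℝ := fun t => e t - sampleMean n e with hf
  set u : ℕ → Fin r → ℝ := fun t => x t - sampleMean n x with hu
  -- decomposition of centered observations
  have hmean : sampleMean n y = A.mulVec (sampleMean n x) + sampleMean n e := by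
    unfold sampleMean
    have hsum : ∑ t ∈ Finset.Icc 1 n, y t
        = A.mulVec (∑ t ∈ Finset.Icc 1 n, x t) + ∑ t ∈ Finset.Icc 1 n, e t := by
      simp_rw [hy]
      rw [Finset.sum_add_distrib]
      congr 1
      rw [← Matrix.mulVecLin_apply, map_sum]
      simp [Matrix.mulVecLin_apply]
    rw [hsum, smul_add]
    congr 1
    rw [← Matrix.mulVecLin_apply, ← Matrix.mulVecLin_apply]
    exact (A.mulVecLin.map_smul _ _).symm
  have hdecomp : ∀ t, y t - sampleMean n y = A.mulVec (u t) + f t := by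
    intro t
    rw [hy t, hmean]
    have hA : A.mulVec (u t) = A.mulVec (x t) - A.mulVec (sampleMean n x) := by
      rw [hu, ← Matrix.mulVecLin_apply, ← Matrix.mulVecLin_apply, ← Matrix.mulVecLin_apply,
        ← map_sub]
    rw [hA, hf]
    beta_reduce
    abel
  -- the linear map whose kernel carries small quadratic form
  set Φ : (Fin p → ℝ) →ₗ[ℝ] (Fin r → ℝ) × (Fin k₀ → Fin r → ℝ) :=
    LinearMap.prod (Matrix.mulVecLin Aᵀ)
      (LinearMap.pi fun k : Fin k₀ =>
        ∑ t ∈ Finset.Icc 1 (n - (k.1 + 1)), (dotLin (f (t + (k.1 + 1)))).smulRight (u t))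
    with hΦ
  set K := LinearMap.ker Φ with hK
  have hker : ∀ v ∈ K, v ᵥ* A = 0 ∧
      ∀ j : Fin k₀,
        ∑ t ∈ Finset.Icc 1 (n - (j.1 + 1)), (f (t + (j.1 + 1)) ⬝ᵥ v) • u t = 0 := by
    intro v hv
    rw [hK, LinearMap.mem_ker] at hv
    have h1 := congrArg Prod.fst hv
    have h2 := congrArg Prod.snd hv
    constructor
    · simpa [hΦ, Matrix.mulVecLin_apply] using h1
    · intro j
      have := congrFun h2 j
      simpa [hΦ, LinearMap.pi_apply, LinearMap.sum_apply, LinearMap.smulRight_apply] using this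
  -- key identity on K
  have hSk : ∀ v ∈ K, ∀ k ∈ Finset.Icc 1 k₀,
      (sampleAutoCov n k y)ᵀ.mulVec v = (sampleAutoCov n k e)ᵀ.mulVec v := by
    intro v hv k hk
    obtain ⟨hv1, hv2⟩ := hker v hv
    rw [sampleAutoCov_transpose_mulVec, sampleAutoCov_transpose_mulVec]
    congr 1
    have hcoef : ∀ s, (y s - sampleMean n y) ⬝ᵥ v = f s ⬝ᵥ v := by
      intro s
      rw [hdecomp s, add_dotProduct]
      have hz : (A.mulVec (u s)) ⬝ᵥ v = 0 := by
        rw [dotProduct_comm, dotProduct_mulVec, hv1, zero_dotProduct]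
      rw [hz, zero_add]
    obtain ⟨hk1, hk2⟩ := Finset.mem_Icc.mp hk
    have hkk : k - 1 + 1 = k := Nat.succ_pred_eq_of_pos hk1
    have hzero := hv2 ⟨k - 1, by omega⟩
    simp only [hkk] at hzero
    calc ∑ t ∈ Finset.Icc 1 (n - k),
          ((y (t + k) - sampleMean n y) ⬝ᵥ v) • (y t - sampleMean n y)
        = ∑ t ∈ Finset.Icc 1 (n - k), (f (t + k) ⬝ᵥ v) • (A.mulVec (u t) + f t) := by
          refine Finset.sum_congr rfl fun t _ => ?_
          rw [hcoef, hdecomp]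
      _ = A.mulVec (∑ t ∈ Finset.Icc 1 (n - k), (f (t + k) ⬝ᵥ v) • u t)
            + ∑ t ∈ Finset.Icc 1 (n - k), (f (t + k) ⬝ᵥ v) • f t := by
          rw [mulVec_sum_vec, ← Finset.sum_add_distrib]
          refine Finset.sum_congr rfl fun t _ => ?_
          rw [smul_add]
          congr 1
          exact (A.mulVecLin.map_smul _ _).symm
      _ = ∑ t ∈ Finset.Icc 1 (n - k),
            ((e (t + k) - sampleMean n e) ⬝ᵥ v) • (e t - sampleMean n e) := by
          rw [hzero, Matrix.mulVec_zero, zero_add]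
  -- symmetry of Mhat
  have hsym : Mhatᵀ = Mhat := by
    rw [hMhat, Matrix.transpose_sum]
    refine Finset.sum_congr rfl fun k _ => ?_
    rw [Matrix.transpose_mul, Matrix.transpose_transpose]
  -- quadratic form bound on K
  have hquadK : ∀ v ∈ K, v ⬝ᵥ Mhat.mulVec v ≤ c * (v ⬝ᵥ v) := by
    intro v hv
    rw [hMhat, sum_mulVec', dot_sum_right]
    have hterm : ∀ k ∈ Finset.Icc 1 k₀,
        v ⬝ᵥ (sampleAutoCov n k y * (sampleAutoCov n k y)ᵀ).mulVec v
          ≤ specNorm (sampleAutoCov n k e) ^ 2 * (v ⬝ᵥ v) := by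
      intro k hk
      rw [← Matrix.mulVec_mulVec, dotProduct_mulVec, ← Matrix.mulVec_transpose,
        hSk v hv k hk]
      calc (sampleAutoCov n k e)ᵀ.mulVec v ⬝ᵥ (sampleAutoCov n k e)ᵀ.mulVec v
          ≤ specNorm ((sampleAutoCov n k e)ᵀ) ^ 2 * (v ⬝ᵥ v) := dot_mulVec_le _ _
        _ = specNorm (sampleAutoCov n k e) ^ 2 * (v ⬝ᵥ v) := by rw [specNorm_transpose]
    calc ∑ k ∈ Finset.Icc 1 k₀, v ⬝ᵥ (sampleAutoCov n k y * (sampleAutoCov n k y)ᵀ).mulVec v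
        ≤ ∑ k ∈ Finset.Icc 1 k₀, specNorm (sampleAutoCov n k e) ^ 2 * (v ⬝ᵥ v) :=
          Finset.sum_le_sum hterm
      _ = c * (v ⬝ᵥ v) := by rw [hc, Finset.sum_mul]
  -- quadratic form lower bound on the eigenspace sum
  set U := {μ : ℝ | c < μ} with hU
  set S := ⨆ μ ∈ U, Module.End.eigenspace Mhat.mulVecLin μ with hS
  have hquadS : ∀ v ∈ S, v ≠ 0 → c * (v ⬝ᵥ v) < v ⬝ᵥ Mhat.mulVec v := by
    intro v hvS hvne
    have hv' : v ∈ ⨆ μ : U, Module.End.eigenspace Mhat.mulVecLin μ.1 := by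
      rwa [iSup_subtype]
    rw [Submodule.mem_iSup_iff_exists_finsupp] at hv'
    obtain ⟨g, hg, hgsum⟩ := hv'
    have heig : ∀ μ : U, Mhat.mulVec (g μ) = μ.1 • g μ := by
      intro μ
      have := hg μ
      rw [Module.End.mem_eigenspace_iff] at this
      simpa [Matrix.mulVecLin_apply] using this
    have hv : v = ∑ μ ∈ g.support, g μ := by rw [← hgsum]; rfl
    have horth : ∀ μ ∈ g.support, ∀ ν ∈ g.support, μ ≠ ν → g μ ⬝ᵥ g ν = 0 := by
      intro μ _ ν _ hne
      exact eig_orth Mhat hsym (fun h => hne (Subtype.ext h)) (heig μ) (heig ν)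
    have hvdot : v ⬝ᵥ v = ∑ μ ∈ g.support, g μ ⬝ᵥ g μ := by
      rw [hv, dot_sum_left]
      refine Finset.sum_congr rfl fun μ hμ => ?_
      rw [dot_sum_right]
      exact Finset.sum_eq_single_of_mem μ hμ fun ν hν hne =>
        horth μ hμ ν hν fun h => hne h.symm
    have hquad : v ⬝ᵥ Mhat.mulVec v = ∑ μ ∈ g.support, μ.1 * (g μ ⬝ᵥ g μ) := by
      rw [hv, mulVec_sum_vec, dot_sum_left]
      refine Finset.sum_congr rfl fun μ hμ => ?_
      rw [dot_sum_right]
      have hdg : ∀ ν : U, g μ ⬝ᵥ Mhat.mulVec (g ν) = ν.1 * (g μ ⬝ᵥ g ν) := by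
        intro ν
        rw [heig, dotProduct_smul]; rfl
      have : ∀ ν ∈ g.support, ν ≠ μ → g μ ⬝ᵥ Mhat.mulVec (g ν) = 0 := by
        intro ν hν hne
        rw [hdg, horth μ hμ ν hν fun h => hne h.symm, mul_zero]
      rw [Finset.sum_eq_single_of_mem μ hμ this, hdg]
    -- positivity
    have hvv : 0 < v ⬝ᵥ v :=
      lt_of_le_of_ne (dotProduct_self_nonneg v)
        (Ne.symm fun h => hvne (dotProduct_self_eq_zero.mp h))
    obtain ⟨μ₀, hμ₀, hdpos⟩ : ∃ μ ∈ g.support, 0 < g μ ⬝ᵥ g μ := by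
      by_contra h
      push_neg at h
      have : v ⬝ᵥ v ≤ 0 := by
        rw [hvdot]; exact Finset.sum_nonpos h
      linarith
    have hsubpos : 0 < ∑ μ ∈ g.support, (μ.1 - c) * (g μ ⬝ᵥ g μ) := by
      refine Finset.sum_pos' (fun μ _ => ?_) ⟨μ₀, hμ₀, ?_⟩
      · have : c < μ.1 := μ.2
        exact mul_nonneg (by linarith) (dotProduct_self_nonneg _)
      · have : c < μ₀.1 := μ₀.2
        exact mul_pos (by linarith) hdpos
    have hexp : ∑ μ ∈ g.support, (μ.1 - c) * (g μ ⬝ᵥ g μ)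
        = (∑ μ ∈ g.support, μ.1 * (g μ ⬝ᵥ g μ)) - c * ∑ μ ∈ g.support, g μ ⬝ᵥ g μ := by
      rw [Finset.mul_sum, ← Finset.sum_sub_distrib]
      refine Finset.sum_congr rfl fun μ _ => ?_
      ring
    rw [hvdot, hquad]
    rw [hexp] at hsubpos
    linarith
  -- disjointness and dimension count
  have hdisj : Disjoint S K := by
    rw [Submodule.disjoint_def]
    intro v hvS hvK
    by_contra hvne
    exact absurd (hquadK v hvK) (not_le.mpr (hquadS v hvS hvne))
  have h1 : Module.finrank ℝ S + Module.finrank ℝ K ≤ p := by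
    have := Submodule.finrank_add_finrank_le_of_disjoint hdisj
    rwa [Module.finrank_fin_fun] at this
  have h2 : Module.finrank ℝ (LinearMap.range Φ) + Module.finrank ℝ K = p := by
    have := LinearMap.finrank_range_add_finrank_ker Φ
    rwa [Module.finrank_fin_fun] at this
  have h3 : Module.finrank ℝ (LinearMap.range Φ) ≤ (k₀ + 1) * r := by
    refine le_trans (Submodule.finrank_le _) ?_
    rw [Module.finrank_prod, Module.finrank_fin_fun, Module.finrank_pi_fintype]
    simp only [Module.finrank_fin_fun, Finset.sum_const, Finset.card_univ, Fintype.card_fin,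
      smul_eq_mul]
    ring_nf
    omega
  omega
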